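/- For every profile (v_1, ..., v_n) of 1-restricted additive chore valuations, the randomized allocation returned by RandChore on this profile is ex-ante Pareto optimal, ex-ante utilitarian welfare maximizing, and ex-ante egalitarian welfare maximizing (all among fractional allocations), is ex-post Pareto optimal and ex-post utilitarian welfare maximizing (among deterministic allocations), and is an ex-post 2-approximation of the maximum egalitarian welfare: every deterministic allocation A* in its support satisfies min_i v_i(A*_i) ≥ 2 · max_B min_i v_i(B_i), where B ranges over all deterministic allocations. -/

import Mathlib

open Finset

attribute [local instance] Classical.propDecidable

noncomputable section

/-- The bundle of agent `i` under deterministic allocation `A`. -/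
def bundle {m n : ℕ} (A : Fin m → Fin n) (i : Fin n) : Finset (Fin m) :=
  Finset.univ.filter fun j => A j = i

/-- Additive value of a bundle. -/
def sval {m : ℕ} (f : Fin m → ℝ) (S : Finset (Fin m)) : ℝ := ∑ j ∈ S, f j

/-- The set `Q` of (indices of) items on which some agent reports value zero. -/
def chQ {n m : ℕ} (r : Fin n → Fin m → ℝ) : Finset (Fin m) :=
  Finset.univ.filter fun q => ∃ i, r i q = 0

/-- The set of agents reporting value zero on item `q`. -/
def chZ {n m : ℕ} (r : Fin n → Fin m → ℝ) (q : Fin m) : Finset (Fin n) :=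
  Finset.univ.filter fun i => r i q = 0

/-- The position of item `q ∈ Q̄` in the list of the items of `Q̄` sorted in nonincreasing
order of inherent value `w`, ties broken by smallest index. -/
def chRank {n m : ℕ} (w : Fin m → ℝ) (r : Fin n → Fin m → ℝ) (q : Fin m) : ℕ :=
  (((chQ r)ᶜ).filter fun q' => w q' > w q ∨ (w q' = w q ∧ q' < q)).card

/-- The probability that mechanism `RandChore`, on reported profile `r` (inherent values `w`),
outputs the deterministic allocation `A`: each item of `Q` goes independently and uniformly to
an agent reporting zero on it, and the items of `Q̄` are allocated round-robin (in nonincreasing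
inherent value, ties by index) according to a uniformly random permutation of the agents. -/
def randChoreProb {n m : ℕ} (hn : 0 < n) (w : Fin m → ℝ) (r : Fin n → Fin m → ℝ)
    (A : Fin m → Fin n) : ℝ :=
  ((∑ σ : Equiv.Perm (Fin n),
      if ∀ q ∈ (chQ r)ᶜ, A q = σ ⟨chRank w r q % n, Nat.mod_lt _ hn⟩ then (1 : ℝ) else 0)
    / (Fintype.card (Equiv.Perm (Fin n)) : ℝ))
  * ∏ q ∈ chQ r, (if r (A q) q = 0 then (1 : ℝ) / ((chZ r q).card : ℝ) else 0)

/-- The expected utility, under `RandChore` on reported profile `r`, of agent `i` whose true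
additive valuation is `vi`. -/
def randChoreExp {n m : ℕ} (hn : 0 < n) (w : Fin m → ℝ) (r : Fin n → Fin m → ℝ)
    (vi : Fin m → ℝ) (i : Fin n) : ℝ :=
  ∑ A : Fin m → Fin n, randChoreProb hn w r A * sval vi (bundle A i)

/-- `a` is a fractional allocation. -/
def IsFrac {m n : ℕ} (a : Fin m → Fin n → ℝ) : Prop :=
  (∀ j i, 0 ≤ a j i) ∧ ∀ j, ∑ i, a j i = 1

/-- The fractional allocation implemented by the randomized allocation `p`. -/
def implFrac {m n : ℕ} (p : (Fin m → Fin n) → ℝ) : Fin m → Fin n → ℝ :=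
  fun j i => ∑ A, p A * (if A j = i then 1 else 0)

/-- Value of agent with item values `vi` for the fractional bundle of agent `i` in `a`. -/
def fval {m n : ℕ} (vi : Fin m → ℝ) (a : Fin m → Fin n → ℝ) (i : Fin n) : ℝ :=
  ∑ j, a j i * vi j

/-- Deterministic allocation `B` Pareto dominates `A`. -/
def ParetoDom {m n : ℕ} (v : Fin n → Fin m → ℝ) (B A : Fin m → Fin n) : Prop :=
  (∀ i, sval (v i) (bundle B i) ≥ sval (v i) (bundle A i)) ∧
  ∃ i, sval (v i) (bundle B i) > sval (v i) (bundle A i)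


lemma sum_prod_fn {m n : ℕ} (H : Fin m → Fin n → ℝ) :
    ∑ A : Fin m → Fin n, ∏ q, H q (A q) = ∏ q, ∑ i, H q i := by
  classical
  rw [Finset.prod_univ_sum]
  simp [Fintype.piFinset_univ]

lemma perm_count {n : ℕ} (k i : Fin n) :
    ∑ σ : Equiv.Perm (Fin n), (if σ k = i then (1:ℝ) else 0)
      = (Fintype.card (Equiv.Perm (Fin n)) : ℝ) / n := by
  classical
  have hconst : ∀ i' : Fin n,
      (∑ σ : Equiv.Perm (Fin n), (if σ k = i' then (1:ℝ) else 0))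
        = ∑ σ : Equiv.Perm (Fin n), (if σ k = i then (1:ℝ) else 0) := by
    intro i'
    refine Fintype.sum_equiv (Equiv.mulLeft (Equiv.swap i i')) _ _ ?_
    intro σ
    have h1 : (Equiv.mulLeft (Equiv.swap i i') σ) k = Equiv.swap i i' (σ k) := rfl
    rw [h1]
    have hiff : Equiv.swap i i' (σ k) = i ↔ σ k = i' := by
      constructor
      · intro hc
        apply (Equiv.swap i i').injective
        rw [hc, Equiv.swap_apply_right]
      · intro hc
        rw [hc, Equiv.swap_apply_right]
    exact (if_congr hiff rfl rfl).symm
  have htot : ∑ i' : Fin n, (∑ σ : Equiv.Perm (Fin n), (if σ k = i' then (1:ℝ) else 0))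
      = (Fintype.card (Equiv.Perm (Fin n)) : ℝ) := by
    rw [Finset.sum_comm]
    simp
  rw [Finset.sum_congr rfl (fun i' _ => hconst i'), Finset.sum_const, card_univ,
    Fintype.card_fin, nsmul_eq_mul] at htot
  have hn0 : (n : ℝ) ≠ 0 := by
    have : 0 < n := k.pos
    positivity
  field_simp at htot ⊢
  linarith [htot]


lemma sum_uQ {n m : ℕ} (v : Fin n → Fin m → ℝ) {q : Fin m} (hq : q ∈ chQ v) :
    ∑ x : Fin n, (if v x q = 0 then (1:ℝ)/((chZ v q).card : ℝ) else 0) = 1 := by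
  classical
  have hZ : (chZ v q).Nonempty := by
    simp only [chQ, mem_filter, mem_univ, true_and] at hq
    obtain ⟨i, hi⟩ := hq
    exact ⟨i, by simp [chZ, hi]⟩
  rw [← Finset.sum_filter]
  have : (Finset.univ.filter fun x => v x q = 0) = chZ v q := rfl
  rw [this, Finset.sum_const, nsmul_eq_mul]
  have hc : ((chZ v q).card : ℝ) ≠ 0 := by
    simp [Finset.card_ne_zero_of_mem hZ.choose_spec]
  field_simp

lemma prob_nonneg {n m : ℕ} (hn : 0 < n) (w : Fin m → ℝ) (v : Fin n → Fin m → ℝ)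
    (A : Fin m → Fin n) : 0 ≤ randChoreProb hn w v A := by
  classical
  unfold randChoreProb
  apply mul_nonneg
  · apply div_nonneg
    · apply Finset.sum_nonneg
      intro σ _
      split <;> norm_num
    · positivity
  · apply Finset.prod_nonneg
    intro q _
    split
    · positivity
    · exact le_refl 0

lemma supportQ {n m : ℕ} (hn : 0 < n) (w : Fin m → ℝ) (v : Fin n → Fin m → ℝ)
    {A : Fin m → Fin n} (hA : 0 < randChoreProb hn w v A) :
    ∀ q ∈ chQ v, v (A q) q = 0 := by
  classical
  intro q hq
  by_contra hne
  have : randChoreProb hn w v A = 0 := by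
    unfold randChoreProb
    rw [Finset.prod_eq_zero hq (by simp [hne]), mul_zero]
  rw [this] at hA
  exact lt_irrefl _ hA

lemma supportPerm {n m : ℕ} (hn : 0 < n) (w : Fin m → ℝ) (v : Fin n → Fin m → ℝ)
    {A : Fin m → Fin n} (hA : 0 < randChoreProb hn w v A) :
    ∃ σ : Equiv.Perm (Fin n), ∀ q ∈ (chQ v)ᶜ,
      A q = σ ⟨chRank w v q % n, Nat.mod_lt _ hn⟩ := by
  classical
  by_contra hno
  push_neg at hno
  have : randChoreProb hn w v A = 0 := by
    unfold randChoreProb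
    have : (∑ σ : Equiv.Perm (Fin n),
        if ∀ q ∈ (chQ v)ᶜ, A q = σ ⟨chRank w v q % n, Nat.mod_lt _ hn⟩ then (1:ℝ) else 0) = 0 := by
      apply Finset.sum_eq_zero
      intro σ _
      obtain ⟨q, hq, hne⟩ := hno σ
      rw [if_neg]
      intro hall
      exact hne (hall q hq)
    rw [this, zero_div, zero_mul]
  rw [this] at hA
  exact lt_irrefl _ hA

lemma inner2 {n m : ℕ} (hn : 0 < n) (w : Fin m → ℝ) (v : Fin n → Fin m → ℝ)
    (σ : Equiv.Perm (Fin n)) {j : Fin m} (hj : j ∉ chQ v) (i : Fin n) :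
    ∑ A : Fin m → Fin n,
      (if ∀ q ∈ (chQ v)ᶜ, A q = σ ⟨chRank w v q % n, Nat.mod_lt _ hn⟩ then (1:ℝ) else 0)
        * (∏ q ∈ chQ v, (if v (A q) q = 0 then (1:ℝ) / ((chZ v q).card : ℝ) else 0))
        * (if A j = i then (1:ℝ) else 0)
    = if σ ⟨chRank w v j % n, Nat.mod_lt _ hn⟩ = i then 1 else 0 := by
  classical
  set rr : Fin m → Fin n := fun q => σ ⟨chRank w v q % n, Nat.mod_lt _ hn⟩ with hrr
  set H : Fin m → Fin n → ℝ := fun q x =>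
    ((if q ∈ chQ v then (if v x q = 0 then (1:ℝ)/((chZ v q).card : ℝ) else 0)
      else if x = rr q then 1 else 0)
     * (if q = j then (if x = i then (1:ℝ) else 0) else 1)) with hH
  have hterm : ∀ A : Fin m → Fin n,
      (if ∀ q ∈ (chQ v)ᶜ, A q = rr q then (1:ℝ) else 0)
        * (∏ q ∈ chQ v, (if v (A q) q = 0 then (1:ℝ)/((chZ v q).card : ℝ) else 0))
        * (if A j = i then (1:ℝ) else 0)
      = ∏ q, H q (A q) := by
    intro A
    have hbase : (∏ q : Fin m,
        (if q ∈ chQ v then (if v (A q) q = 0 then (1:ℝ)/((chZ v q).card:ℝ) else 0)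
         else if A q = rr q then 1 else 0))
        = (if ∀ q ∈ (chQ v)ᶜ, A q = rr q then (1:ℝ) else 0)
          * ∏ q ∈ chQ v, (if v (A q) q = 0 then (1:ℝ)/((chZ v q).card:ℝ) else 0) := by
      rw [← Finset.prod_mul_prod_compl (chQ v), mul_comm]
      congr 1
      · rw [Finset.prod_congr rfl (fun q hq => if_neg (by simpa using hq) (c := q ∈ chQ v))]
        rw [Finset.prod_boole]
        simp
      · apply Finset.prod_congr rfl
        intro q hq
        rw [if_pos hq]
    have hextra : (∏ q : Fin m, (if q = j then (if A q = i then (1:ℝ) else 0) else 1))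
        = (if A j = i then (1:ℝ) else 0) := by
      rw [Finset.prod_ite_eq' Finset.univ j (fun q => if A q = i then (1:ℝ) else 0)]
      simp
    rw [hH]
    rw [Finset.prod_mul_distrib, hbase, hextra]
  rw [Finset.sum_congr rfl (fun A _ => hterm A), sum_prod_fn]
  have hj' : ∀ q : Fin m, q ≠ j → ∑ x : Fin n, H q x = 1 := by
    intro q hq
    have : ∀ x : Fin n, H q x = (if q ∈ chQ v then (if v x q = 0 then (1:ℝ)/((chZ v q).card : ℝ) else 0)
        else if x = rr q then 1 else 0) := by
      intro x
      rw [hH]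
      simp only [if_neg hq, mul_one]
    rw [Finset.sum_congr rfl (fun x _ => this x)]
    by_cases hQ : q ∈ chQ v
    · simp only [if_pos hQ]
      exact sum_uQ v hQ
    · simp [if_neg hQ]
  have hjj : ∑ x : Fin n, H j x = if rr j = i then 1 else 0 := by
    have : ∀ x : Fin n, H j x = if x = rr j then (if x = i then (1:ℝ) else 0) else 0 := by
      intro x
      rw [hH]
      simp only [if_neg hj, if_pos rfl]
      by_cases h1 : x = rr j <;> by_cases h2 : x = i <;> simp [h1, h2]
    rw [Finset.sum_congr rfl (fun x _ => this x)]
    rw [Finset.sum_ite_eq' Finset.univ (rr j) (fun x => if x = i then (1:ℝ) else 0)]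
    simp
  rw [Finset.prod_eq_single_of_mem j (Finset.mem_univ j) (fun q _ hq => hj' q hq), hjj]

lemma impl_T {n m : ℕ} (hn : 0 < n) (w : Fin m → ℝ) (v : Fin n → Fin m → ℝ)
    {j : Fin m} (hj : j ∉ chQ v) (i : Fin n) :
    implFrac (randChoreProb hn w v) j i = 1 / n := by
  classical
  unfold implFrac randChoreProb
  have hstep : ∀ A : Fin m → Fin n,
      ((∑ σ : Equiv.Perm (Fin n),
        if ∀ q ∈ (chQ v)ᶜ, A q = σ ⟨chRank w v q % n, Nat.mod_lt _ hn⟩ then (1:ℝ) else 0)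
        / (Fintype.card (Equiv.Perm (Fin n)) : ℝ)
        * ∏ q ∈ chQ v, (if v (A q) q = 0 then (1:ℝ)/((chZ v q).card : ℝ) else 0))
        * (if A j = i then (1:ℝ) else 0)
      = (∑ σ : Equiv.Perm (Fin n),
          (if ∀ q ∈ (chQ v)ᶜ, A q = σ ⟨chRank w v q % n, Nat.mod_lt _ hn⟩ then (1:ℝ) else 0)
            * (∏ q ∈ chQ v, (if v (A q) q = 0 then (1:ℝ)/((chZ v q).card : ℝ) else 0))
            * (if A j = i then (1:ℝ) else 0))
          / (Fintype.card (Equiv.Perm (Fin n)) : ℝ) := by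
    intro A
    rw [← Finset.sum_mul, ← Finset.sum_mul]
    ring
  rw [Finset.sum_congr rfl (fun A _ => hstep A), ← Finset.sum_div, Finset.sum_comm]
  rw [Finset.sum_congr rfl (fun σ _ => inner2 hn w v σ hj i)]
  rw [perm_count]
  have hc : (Fintype.card (Equiv.Perm (Fin n)) : ℝ) ≠ 0 := by
    exact_mod_cast Fintype.card_pos.ne'
  field_simp

lemma impl_Q_zero {n m : ℕ} (hn : 0 < n) (w : Fin m → ℝ) (v : Fin n → Fin m → ℝ)
    {j : Fin m} (hj : j ∈ chQ v) {i : Fin n} (hi : v i j ≠ 0) :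
    implFrac (randChoreProb hn w v) j i = 0 := by
  classical
  unfold implFrac
  apply Finset.sum_eq_zero
  intro A _
  rcases eq_or_lt_of_le (prob_nonneg hn w v A) with h0 | hpos
  · rw [← h0, zero_mul]
  · by_cases hAj : A j = i
    · exfalso
      apply hi
      rw [← hAj]
      exact supportQ hn w v hpos j hj
    · rw [if_neg hAj, mul_zero]

lemma vT_eq {n m : ℕ} {w : Fin m → ℝ} {v : Fin n → Fin m → ℝ}
    (hv : ∀ i j, v i j = 0 ∨ v i j = w j) {j : Fin m} (hj : j ∉ chQ v) (x : Fin n) :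
    v x j = w j := by
  rcases hv x j with h | h
  · exfalso
    apply hj
    simp only [chQ, mem_filter, mem_univ, true_and]
    exact ⟨x, h⟩
  · exact h

lemma fval_impl {n m : ℕ} (hn : 0 < n) (w : Fin m → ℝ) (v : Fin n → Fin m → ℝ)
    (hv : ∀ i j, v i j = 0 ∨ v i j = w j) (i : Fin n) :
    fval (v i) (implFrac (randChoreProb hn w v)) i = (∑ q ∈ (chQ v)ᶜ, w q) / n := by
  classical
  unfold fval
  rw [← Finset.sum_add_sum_compl (chQ v)]
  have h1 : ∑ j ∈ chQ v, implFrac (randChoreProb hn w v) j i * v i j = 0 := by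
    apply Finset.sum_eq_zero
    intro j hj
    by_cases hz : v i j = 0
    · rw [hz, mul_zero]
    · rw [impl_Q_zero hn w v hj hz, zero_mul]
  have h2 : ∑ j ∈ (chQ v)ᶜ, implFrac (randChoreProb hn w v) j i * v i j
      = (∑ q ∈ (chQ v)ᶜ, w q) / n := by
    rw [Finset.sum_div]
    apply Finset.sum_congr rfl
    intro j hj
    rw [impl_T hn w v (by simpa using hj) i, vT_eq hv (by simpa using hj) i]
    ring
  rw [h1, h2, zero_add]

lemma sum_sval {n m : ℕ} (v : Fin n → Fin m → ℝ) (B : Fin m → Fin n) :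
    ∑ i, sval (v i) (bundle B i) = ∑ j, v (B j) j := by
  classical
  unfold sval bundle
  rw [← Finset.sum_fiberwise Finset.univ B (fun j => v (B j) j)]
  apply Finset.sum_congr rfl
  intro i _
  apply Finset.sum_congr rfl
  intro j hj
  simp only [Finset.mem_filter] at hj
  rw [hj.2]

lemma v_nonpos {n m : ℕ} {w : Fin m → ℝ} {v : Fin n → Fin m → ℝ}
    (hw : ∀ j, w j < 0) (hv : ∀ i j, v i j = 0 ∨ v i j = w j) (x : Fin n) (j : Fin m) :
    v x j ≤ 0 := by
  rcases hv x j with h | h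
  · exact le_of_eq h
  · rw [h]; exact (hw j).le

lemma welfare_le {n m : ℕ} {w : Fin m → ℝ} {v : Fin n → Fin m → ℝ}
    (hw : ∀ j, w j < 0) (hv : ∀ i j, v i j = 0 ∨ v i j = w j) (B : Fin m → Fin n) :
    ∑ j, v (B j) j ≤ ∑ q ∈ (chQ v)ᶜ, w q := by
  classical
  rw [← Finset.sum_add_sum_compl (chQ v) (fun j => v (B j) j)]
  have hQ : ∑ j ∈ chQ v, v (B j) j ≤ 0 :=
    Finset.sum_nonpos fun j _ => v_nonpos hw hv (B j) j
  have hT : ∑ j ∈ (chQ v)ᶜ, v (B j) j = ∑ q ∈ (chQ v)ᶜ, w q :=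
    Finset.sum_congr rfl fun j hj => vT_eq hv (by simpa using hj) (B j)
  linarith

lemma welfare_A {n m : ℕ} (hn : 0 < n) {w : Fin m → ℝ} {v : Fin n → Fin m → ℝ}
    (hv : ∀ i j, v i j = 0 ∨ v i j = w j) {A : Fin m → Fin n}
    (hA : 0 < randChoreProb hn w v A) :
    ∑ j, v (A j) j = ∑ q ∈ (chQ v)ᶜ, w q := by
  classical
  rw [← Finset.sum_add_sum_compl (chQ v) (fun j => v (A j) j)]
  have hQ : ∑ j ∈ chQ v, v (A j) j = 0 :=
    Finset.sum_eq_zero fun j hj => supportQ hn w v hA j hj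
  have hT : ∑ j ∈ (chQ v)ᶜ, v (A j) j = ∑ q ∈ (chQ v)ᶜ, w q :=
    Finset.sum_congr rfl fun j hj => vT_eq hv (by simpa using hj) (A j)
  rw [hQ, hT, zero_add]

def prec {m : ℕ} (w : Fin m → ℝ) (a b : Fin m) : Prop :=
  w a > w b ∨ (w a = w b ∧ a < b)

lemma prec_trans {m : ℕ} {w : Fin m → ℝ} {a b c : Fin m} :
    prec w a b → prec w b c → prec w a c := by
  rintro (h1 | ⟨h1, h1'⟩) (h2 | ⟨h2, h2'⟩)
  · exact Or.inl (lt_trans h2 h1)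
  · exact Or.inl (h2 ▸ h1)
  · exact Or.inl (by rw [h1]; exact h2)
  · exact Or.inr ⟨h1.trans h2, h1'.trans h2'⟩

lemma prec_irrefl {m : ℕ} {w : Fin m → ℝ} {a : Fin m} : ¬ prec w a a := by
  rintro (h | ⟨_, h⟩)
  · exact lt_irrefl _ h
  · exact lt_irrefl _ h

lemma prec_total {m : ℕ} {w : Fin m → ℝ} {a b : Fin m} (h : a ≠ b) :
    prec w a b ∨ prec w b a := by
  rcases lt_trichotomy (w a) (w b) with h1 | h1 | h1
  · exact Or.inr (Or.inl h1)
  · rcases lt_or_gt_of_ne h with h2 | h2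
    · exact Or.inl (Or.inr ⟨h1, h2⟩)
    · exact Or.inr (Or.inr ⟨h1.symm, h2⟩)
  · exact Or.inl (Or.inl h1)

lemma rank_lt_of_prec {n m : ℕ} {w : Fin m → ℝ} {v : Fin n → Fin m → ℝ} {a b : Fin m}
    (ha : a ∈ (chQ v)ᶜ) (hab : prec w a b) : chRank w v a < chRank w v b := by
  classical
  apply Finset.card_lt_card
  constructor
  · intro x hx
    simp only [Finset.mem_filter] at hx ⊢
    exact ⟨hx.1, prec_trans (w := w) hx.2 hab⟩
  · intro hsub
    have : a ∈ ((chQ v)ᶜ).filter fun q' => w q' > w b ∨ (w q' = w b ∧ q' < b) := by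
      simp only [Finset.mem_filter]
      exact ⟨ha, hab⟩
    have := hsub this
    simp only [Finset.mem_filter] at this
    rcases this.2 with h2 | ⟨_, h2⟩
    · exact lt_irrefl _ h2
    · exact lt_irrefl _ h2

lemma rank_injOn {n m : ℕ} {w : Fin m → ℝ} {v : Fin n → Fin m → ℝ} {a b : Fin m}
    (ha : a ∈ (chQ v)ᶜ) (hb : b ∈ (chQ v)ᶜ) (hr : chRank w v a = chRank w v b) : a = b := by
  by_contra hne
  rcases prec_total (w := w) hne with h | h
  · exact absurd hr (Nat.ne_of_lt (rank_lt_of_prec ha h))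
  · exact absurd hr.symm (Nat.ne_of_lt (rank_lt_of_prec hb h))

lemma rank_lt_card {n m : ℕ} {w : Fin m → ℝ} {v : Fin n → Fin m → ℝ} {a : Fin m}
    (ha : a ∈ (chQ v)ᶜ) : chRank w v a < ((chQ v)ᶜ).card := by
  classical
  apply Finset.card_lt_card
  constructor
  · exact Finset.filter_subset _ _
  · intro hsub
    have := hsub ha
    simp only [Finset.mem_filter] at this
    rcases this.2 with h2 | ⟨_, h2⟩
    · exact lt_irrefl _ h2
    · exact lt_irrefl _ h2

lemma rank_surj {n m : ℕ} {w : Fin m → ℝ} {v : Fin n → Fin m → ℝ} {t : ℕ}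
    (ht : t < ((chQ v)ᶜ).card) : ∃ q ∈ (chQ v)ᶜ, chRank w v q = t := by
  classical
  have himg : ((chQ v)ᶜ).image (chRank w v) = Finset.range ((chQ v)ᶜ).card := by
    apply Finset.eq_of_subset_of_card_le
    · intro x hx
      simp only [Finset.mem_image] at hx
      obtain ⟨q, hq, rfl⟩ := hx
      exact Finset.mem_range.mpr (rank_lt_card hq)
    · rw [Finset.card_range]
      rw [Finset.card_image_of_injOn (fun a ha b hb h => rank_injOn ha hb h)]
  have : t ∈ ((chQ v)ᶜ).image (chRank w v) := by
    rw [himg]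
    exact Finset.mem_range.mpr ht
  simpa using this

lemma w_antitone {n m : ℕ} {w : Fin m → ℝ} {v : Fin n → Fin m → ℝ} {a b : Fin m}
    (ha : a ∈ (chQ v)ᶜ) (hb : b ∈ (chQ v)ᶜ) (hr : chRank w v a ≤ chRank w v b) :
    w b ≤ w a := by
  rcases eq_or_ne a b with rfl | hne
  · exact le_refl _
  rcases prec_total (w := w) hne with h | h
  · rcases h with h | ⟨h, _⟩
    · exact h.le
    · exact h.ge
  · exact absurd hr (not_le.mpr (rank_lt_of_prec hb h))


lemma card_le_one_window {M n k δ : ℕ} (hδn : δ < n) :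
    (((Finset.range M).filter (fun t => t % n = k)).filter (fun t => ¬ t + δ < M)).card ≤ 1 := by
  classical
  rw [Finset.card_le_one]
  intro a ha b hb
  simp only [Finset.mem_filter, Finset.mem_range, not_lt] at ha hb
  obtain ⟨⟨haM, hak⟩, haw⟩ := ha
  obtain ⟨⟨hbM, hbk⟩, hbw⟩ := hb
  rcases le_total a b with hab | hab
  · have h1 : a % n = b % n := by rw [hak, hbk]
    have h2 : n ∣ b - a := (Nat.modEq_iff_dvd' hab).mp h1
    have h3 : b - a < n := by omega
    have : b - a = 0 := by
      rcases Nat.eq_zero_of_dvd_of_lt h2 h3 with h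
      · exact h
    omega
  · have h1 : b % n = a % n := by rw [hak, hbk]
    have h2 : n ∣ a - b := (Nat.modEq_iff_dvd' hab).mp h1
    have h3 : a - b < n := by omega
    have : a - b = 0 := Nat.eq_zero_of_dvd_of_lt h2 h3
    omega


lemma rr_key (W : ℕ → ℝ) (OPT : ℝ) (M n k k' : ℕ) (hk : k < n) (hk' : k' < n)
    (hne : k ≠ k') (hO : OPT ≤ 0) (hOW : ∀ t, t < M → OPT ≤ W t)
    (hW0 : ∀ t, t < M → W t ≤ 0)
    (hmono : ∀ t t', t ≤ t' → t' < M → W t' ≤ W t) :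
    OPT + ∑ t ∈ (Finset.range M).filter (fun t => t % n = k'), W t
      ≤ ∑ t ∈ (Finset.range M).filter (fun t => t % n = k), W t := by
  classical
  have hn0 : 0 < n := lt_of_le_of_lt (Nat.zero_le k) hk
  set δ : ℕ := (n + k' - k) % n with hδ
  have hδn : δ < n := Nat.mod_lt _ hn0
  have hδ1 : 1 ≤ δ := by
    rcases Nat.eq_zero_or_pos δ with h0 | h
    · exfalso
      have hdvd : n ∣ n + k' - k := Nat.dvd_of_mod_eq_zero h0
      obtain ⟨c, hc⟩ := hdvd
      rcases c with _ | _ | c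
      · omega
      · omega
      · have : 2 * n ≤ n * (c + 1 + 1) := by nlinarith
        omega
    · exact h
  have hkδ : (k + δ) % n = k' := by
    have h1 : (k + δ) % n = (k + (n + k' - k)) % n := by
      rw [hδ, Nat.add_mod_mod]
    have h2 : k + (n + k' - k) = n + k' := by omega
    rw [h1, h2, Nat.add_mod_left, Nat.mod_eq_of_lt hk']
  set Sk : Finset ℕ := (Finset.range M).filter (fun t => t % n = k) with hSk
  set D : Finset ℕ := Sk.filter (fun t => t + δ < M) with hD
  set R : Finset ℕ := Sk.filter (fun t => ¬ t + δ < M) with hR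
  set E : Finset ℕ := (Finset.range M).filter (fun t' => t' % n = k' ∧ δ ≤ t') with hE
  have hsplit : ∑ t ∈ D, W t + ∑ t ∈ R, W t = ∑ t ∈ Sk, W t :=
    Finset.sum_filter_add_sum_filter_not Sk _ W
  have hbij : ∑ t ∈ D, W (t + δ) = ∑ t' ∈ E, W t' := by
    apply Finset.sum_nbij' (i := fun t => t + δ) (j := fun t' => t' - δ)
    · intro t ht
      rw [hD, Finset.mem_filter, hSk, Finset.mem_filter, Finset.mem_range] at ht
      obtain ⟨⟨htM, htk⟩, htδ⟩ := ht
      rw [hE, Finset.mem_filter, Finset.mem_range]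
      refine ⟨htδ, ?_, by omega⟩
      rw [Nat.add_mod, htk, Nat.mod_eq_of_lt hδn, hkδ]
    · intro t' ht'
      rw [hE, Finset.mem_filter, Finset.mem_range] at ht'
      obtain ⟨htM', htk', htδ'⟩ := ht'
      rw [hD, Finset.mem_filter, hSk, Finset.mem_filter, Finset.mem_range]
      have hc : t' - δ + δ = t' := by omega
      refine ⟨⟨by omega, ?_⟩, by omega⟩
      have ha : (t' - δ) + δ ≡ k + δ [MOD n] := by
        show ((t' - δ) + δ) % n = (k + δ) % n
        rw [hc, htk']
        exact hkδ.symm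
      have hb : (t' - δ) ≡ k [MOD n] := Nat.ModEq.add_right_cancel' δ ha
      have hb' : (t' - δ) % n = k % n := hb
      rwa [Nat.mod_eq_of_lt hk] at hb'
    · intro t ht
      omega
    · intro t' ht'
      rw [hE, Finset.mem_filter] at ht'
      omega
    · intro t ht
      rfl
  have hDle : ∑ t ∈ D, W (t + δ) ≤ ∑ t ∈ D, W t := by
    apply Finset.sum_le_sum
    intro t ht
    rw [hD, Finset.mem_filter] at ht
    exact hmono t (t + δ) (Nat.le_add_right _ _) ht.2
  have hsub : ∑ t ∈ (Finset.range M).filter (fun t => t % n = k'), W t ≤ ∑ t ∈ E, W t := by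
    have hEsub : E ⊆ (Finset.range M).filter (fun t => t % n = k') := by
      intro t ht
      rw [hE, Finset.mem_filter] at ht
      rw [Finset.mem_filter]
      exact ⟨ht.1, ht.2.1⟩
    have hsd := Finset.sum_sdiff (f := W) hEsub
    have hneg : ∑ t ∈ (Finset.range M).filter (fun t => t % n = k') \ E, W t ≤ 0 := by
      apply Finset.sum_nonpos
      intro t ht
      rw [Finset.mem_sdiff, Finset.mem_filter, Finset.mem_range] at ht
      exact hW0 t ht.1.1
    linarith
  have hRO : OPT ≤ ∑ t ∈ R, W t := by
    rcases Finset.eq_empty_or_nonempty R with hRe | ⟨t, ht⟩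
    · rw [hRe, Finset.sum_empty]
      exact hO
    · have hcard : R.card ≤ 1 := card_le_one_window hδn
      have hRsing : R = {t} := by
        rw [Finset.eq_singleton_iff_unique_mem]
        exact ⟨ht, fun b hb => Finset.card_le_one.mp hcard b hb t ht⟩
      rw [hRsing, Finset.sum_singleton]
      apply hOW
      rw [hR, Finset.mem_filter, hSk, Finset.mem_filter, Finset.mem_range] at ht
      exact ht.1.1
  linarith [hsplit, hDle, hbij, hsub, hRO]
/-- on any truthful 1-restricted additive chores profile, `RandChore` is
ex-ante PO, UWM and EWM (among fractional allocations), ex-post PO and UWM (among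
deterministic allocations), and an ex-post 2-approximation of the optimal egalitarian
welfare. -/
theorem randChore_BoBW_efficiency (n m : ℕ) (hn : 0 < n)
    (w : Fin m → ℝ) (hw : ∀ j, w j < 0)
    (v : Fin n → Fin m → ℝ) (hv : ∀ i j, v i j = 0 ∨ v i j = w j) :
    -- ex-ante Pareto optimality: no fractional allocation Pareto dominates
    (¬ ∃ b : Fin m → Fin n → ℝ, IsFrac b ∧
        (∀ i, fval (v i) b i ≥ fval (v i) (implFrac (randChoreProb hn w v)) i) ∧
        ∃ i, fval (v i) b i > fval (v i) (implFrac (randChoreProb hn w v)) i) ∧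
    -- ex-ante utilitarian welfare maximization
    (∀ b : Fin m → Fin n → ℝ, IsFrac b →
        ∑ i, fval (v i) b i ≤ ∑ i, fval (v i) (implFrac (randChoreProb hn w v)) i) ∧
    -- ex-ante egalitarian welfare maximization
    (∀ b : Fin m → Fin n → ℝ, IsFrac b →
        Finset.univ.inf' ⟨⟨0, hn⟩, Finset.mem_univ _⟩ (fun i => fval (v i) b i) ≤
        Finset.univ.inf' ⟨⟨0, hn⟩, Finset.mem_univ _⟩
          (fun i => fval (v i) (implFrac (randChoreProb hn w v)) i)) ∧
    -- ex-post Pareto optimality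
    (∀ A : Fin m → Fin n, 0 < randChoreProb hn w v A →
        ¬ ∃ B : Fin m → Fin n, ParetoDom v B A) ∧
    -- ex-post utilitarian welfare maximization
    (∀ A : Fin m → Fin n, 0 < randChoreProb hn w v A → ∀ B : Fin m → Fin n,
        ∑ i, sval (v i) (bundle B i) ≤ ∑ i, sval (v i) (bundle A i)) ∧
    -- ex-post 2-approximation of the optimal egalitarian welfare
    (∀ A : Fin m → Fin n, 0 < randChoreProb hn w v A →
        Finset.univ.inf' ⟨⟨0, hn⟩, Finset.mem_univ _⟩ (fun i => sval (v i) (bundle A i)) ≥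
        2 * Finset.univ.sup' ⟨fun _ => ⟨0, hn⟩, Finset.mem_univ _⟩
          (fun B : Fin m → Fin n =>
            Finset.univ.inf' ⟨⟨0, hn⟩, Finset.mem_univ _⟩ (fun i => sval (v i) (bundle B i)))) := by
  classical
  set Wstar : ℝ := ∑ q ∈ (chQ v)ᶜ, w q with hWstar
  have hnR : (0:ℝ) < n := by exact_mod_cast hn
  have hfi : ∀ i, fval (v i) (implFrac (randChoreProb hn w v)) i = Wstar / n :=
    fun i => fval_impl hn w v hv i
  have hrhs : ∑ i, fval (v i) (implFrac (randChoreProb hn w v)) i = Wstar := by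
    rw [Finset.sum_congr rfl (fun i _ => hfi i), Finset.sum_const, Finset.card_univ,
      Fintype.card_fin, nsmul_eq_mul, mul_div_cancel₀ _ hnR.ne']
  -- ex-ante UWM
  have part2 : ∀ b : Fin m → Fin n → ℝ, IsFrac b →
      ∑ i, fval (v i) b i ≤ ∑ i, fval (v i) (implFrac (randChoreProb hn w v)) i := by
    rintro b ⟨hb0, hb1⟩
    rw [hrhs]
    have hswap : ∑ i, fval (v i) b i = ∑ j, ∑ i : Fin n, b j i * v i j := by
      unfold fval
      rw [Finset.sum_comm]
    rw [hswap, hWstar, ← Finset.sum_add_sum_compl (chQ v) (fun j => ∑ i : Fin n, b j i * v i j)]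
    have h1 : ∑ j ∈ chQ v, ∑ i : Fin n, b j i * v i j ≤ 0 :=
      Finset.sum_nonpos fun j _ => Finset.sum_nonpos fun i _ =>
        mul_nonpos_iff.mpr (Or.inl ⟨hb0 j i, v_nonpos hw hv i j⟩)
    have h2 : ∑ j ∈ (chQ v)ᶜ, ∑ i : Fin n, b j i * v i j = ∑ j ∈ (chQ v)ᶜ, w j := by
      apply Finset.sum_congr rfl
      intro j hj
      calc ∑ i : Fin n, b j i * v i j = ∑ i : Fin n, b j i * w j := by
            apply Finset.sum_congr rfl
            intro i _
            rw [vT_eq hv (by simpa using hj) i]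
        _ = (∑ i : Fin n, b j i) * w j := by rw [Finset.sum_mul]
        _ = w j := by rw [hb1 j, one_mul]
    linarith
  -- ex-post UWM
  have part5 : ∀ A : Fin m → Fin n, 0 < randChoreProb hn w v A → ∀ B : Fin m → Fin n,
      ∑ i, sval (v i) (bundle B i) ≤ ∑ i, sval (v i) (bundle A i) := by
    intro A hA B
    rw [sum_sval v B, sum_sval v A, welfare_A hn hv hA]
    exact welfare_le hw hv B
  refine ⟨?_, part2, ?_, ?_, part5, ?_⟩
  -- ex-ante PO
  · rintro ⟨b, hbf, hge, i0, hgt⟩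
    have hlt : ∑ i, fval (v i) (implFrac (randChoreProb hn w v)) i < ∑ i, fval (v i) b i :=
      Finset.sum_lt_sum (fun i _ => hge i) ⟨i0, Finset.mem_univ _, hgt⟩
    have := part2 b hbf
    linarith
  -- ex-ante EWM
  · intro b hb
    have hconst : (Finset.univ.inf' ⟨⟨0, hn⟩, Finset.mem_univ _⟩
        (fun i => fval (v i) (implFrac (randChoreProb hn w v)) i)) = Wstar / n := by
      rw [show (fun i => fval (v i) (implFrac (randChoreProb hn w v)) i)
          = fun _ : Fin n => Wstar / n from funext hfi]
      exact Finset.inf'_const _ _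
    rw [hconst]
    set infb := Finset.univ.inf' ⟨⟨0, hn⟩, Finset.mem_univ _⟩ (fun i => fval (v i) b i) with hib
    have h1 : (n : ℝ) * infb ≤ ∑ i, fval (v i) b i := by
      calc (n:ℝ) * infb = ∑ _i : Fin n, infb := by
            rw [Finset.sum_const, Finset.card_univ, Fintype.card_fin, nsmul_eq_mul]
        _ ≤ ∑ i, fval (v i) b i :=
            Finset.sum_le_sum fun i _ => Finset.inf'_le _ (Finset.mem_univ i)
    have h2 := part2 b hb
    rw [hrhs] at h2
    rw [le_div_iff₀ hnR]
    linarith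
  -- ex-post PO
  · rintro A hA ⟨B, hBg, i0, hBs⟩
    have hlt : ∑ i, sval (v i) (bundle A i) < ∑ i, sval (v i) (bundle B i) :=
      Finset.sum_lt_sum (fun i _ => hBg i) ⟨i0, Finset.mem_univ _, hBs⟩
    have := part5 A hA B
    linarith
  -- ex-post 2-approx egalitarian
  · intro A hA
    rw [ge_iff_le]
    set OPT : ℝ := Finset.univ.sup' ⟨fun _ => ⟨0, hn⟩, Finset.mem_univ _⟩
      (fun B : Fin m → Fin n =>
        Finset.univ.inf' ⟨⟨0, hn⟩, Finset.mem_univ _⟩ fun i => sval (v i) (bundle B i)) with hOPTd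
    have hO1 : OPT ≤ 0 := by
      apply Finset.sup'_le
      intro B _
      have h1 := Finset.inf'_le (fun i => sval (v i) (bundle B i))
        (Finset.mem_univ (⟨0, hn⟩ : Fin n))
      have h2 : sval (v (⟨0, hn⟩ : Fin n)) (bundle B ⟨0, hn⟩) ≤ 0 :=
        Finset.sum_nonpos fun j _ => v_nonpos hw hv _ j
      exact le_trans h1 h2
    have hO2 : ∀ q ∈ (chQ v)ᶜ, OPT ≤ w q := by
      intro q hq
      apply Finset.sup'_le
      intro B _
      have h1 := Finset.inf'_le (fun i => sval (v i) (bundle B i)) (Finset.mem_univ (B q))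
      have hqb : q ∈ bundle B (B q) := by simp [bundle]
      have h3 := Finset.add_sum_erase (bundle B (B q)) (v (B q)) hqb
      have h4 : ∑ x ∈ (bundle B (B q)).erase q, v (B q) x ≤ 0 :=
        Finset.sum_nonpos fun j _ => v_nonpos hw hv _ j
      have h5 : v (B q) q = w q := vT_eq hv (by simpa using hq) _
      have h2 : sval (v (B q)) (bundle B (B q)) ≤ w q := by
        have : sval (v (B q)) (bundle B (B q)) = ∑ x ∈ bundle B (B q), v (B q) x := rfl
        rw [this, ← h3, h5]
        linarith
      exact le_trans h1 h2
    have hO3 : OPT ≤ Wstar / n := by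
      apply Finset.sup'_le
      intro B _
      rw [le_div_iff₀ hnR]
      have h2 : ∑ _i : Fin n, (Finset.univ.inf' ⟨⟨0, hn⟩, Finset.mem_univ _⟩
          fun i => sval (v i) (bundle B i)) ≤ ∑ i, sval (v i) (bundle B i) :=
        Finset.sum_le_sum fun i _ => Finset.inf'_le _ (Finset.mem_univ i)
      rw [Finset.sum_const, Finset.card_univ, Fintype.card_fin, nsmul_eq_mul] at h2
      have h3 := sum_sval v B
      have h4 := welfare_le hw hv B
      rw [mul_comm]
      linarith
    obtain ⟨σ, hσ⟩ := supportPerm hn w v hA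
    have hsvalA : ∀ i : Fin n, sval (v i) (bundle A i)
        = ∑ q ∈ ((chQ v)ᶜ).filter
            (fun q => chRank w v q % n = ((σ.symm i : Fin n) : ℕ)), w q := by
      intro i
      have h0 : sval (v i) (bundle A i) = ∑ j : Fin m, (if A j = i then v i j else 0) := by
        rw [← Finset.sum_filter]
        rfl
      rw [h0, ← Finset.sum_add_sum_compl (chQ v) (fun j => if A j = i then v i j else 0)]
      have hQ0 : ∑ j ∈ chQ v, (if A j = i then v i j else 0) = 0 := by
        apply Finset.sum_eq_zero
        intro j hj
        by_cases hc : A j = i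
        · rw [if_pos hc, ← hc]
          exact supportQ hn w v hA j hj
        · rw [if_neg hc]
      have hT0 : ∑ j ∈ (chQ v)ᶜ, (if A j = i then v i j else 0)
          = ∑ q ∈ ((chQ v)ᶜ).filter
              (fun q => chRank w v q % n = ((σ.symm i : Fin n) : ℕ)), w q := by
        rw [Finset.sum_filter]
        apply Finset.sum_congr rfl
        intro j hj
        have hvw : v i j = w j := vT_eq hv (by simpa using hj) i
        have hAj : A j = σ ⟨chRank w v j % n, Nat.mod_lt _ hn⟩ := hσ j hj
        by_cases hcase : chRank w v j % n = ((σ.symm i : Fin n) : ℕ)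
        · rw [if_pos hcase, if_pos, hvw]
          rw [hAj, show (⟨chRank w v j % n, Nat.mod_lt _ hn⟩ : Fin n) = σ.symm i
            from Fin.ext hcase, Equiv.apply_symm_apply]
        · rw [if_neg hcase, if_neg]
          intro hc
          apply hcase
          rw [hAj] at hc
          have := congrArg σ.symm hc
          rw [Equiv.symm_apply_apply] at this
          exact congrArg Fin.val this
      rw [hQ0, hT0, zero_add]
    by_cases hM0 : 0 < ((chQ v)ᶜ).card
    case neg =>
      have hTe : (chQ v)ᶜ = (∅ : Finset (Fin m)) := by
        rw [← Finset.card_eq_zero]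
        omega
      apply Finset.le_inf'
      intro i _
      rw [hsvalA i, hTe, Finset.filter_empty, Finset.sum_empty]
      linarith
    case pos =>
    set M : ℕ := ((chQ v)ᶜ).card with hMd
    have hsurj : ∀ t : ℕ, ∃ q : Fin m, t < M → q ∈ (chQ v)ᶜ ∧ chRank w v q = t := by
      intro t
      by_cases h : t < M
      · obtain ⟨q, hq1, hq2⟩ := rank_surj (w := w) (v := v) h
        exact ⟨q, fun _ => ⟨hq1, hq2⟩⟩
      · obtain ⟨q0, _⟩ := Finset.card_pos.mp hM0
        exact ⟨q0, fun ht => absurd ht h⟩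
    choose e he using hsurj
    set W : ℕ → ℝ := fun t => w (e t) with hWdef
    have heT : ∀ t, t < M → e t ∈ (chQ v)ᶜ := fun t ht => (he t ht).1
    have heρ : ∀ t, t < M → chRank w v (e t) = t := fun t ht => (he t ht).2
    have heρq : ∀ q ∈ (chQ v)ᶜ, e (chRank w v q) = q := by
      intro q hq
      have h1 : chRank w v q < M := rank_lt_card hq
      exact rank_injOn (heT _ h1) hq (heρ _ h1)
    have htrans : ∀ k : ℕ, ∑ q ∈ ((chQ v)ᶜ).filter (fun q => chRank w v q % n = k), w q
        = ∑ t ∈ (Finset.range M).filter (fun t => t % n = k), W t := by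
      intro k
      apply Finset.sum_nbij' (i := fun q => chRank w v q) (j := e)
      · intro q hq
        rw [Finset.mem_filter] at hq
        rw [Finset.mem_filter, Finset.mem_range]
        exact ⟨rank_lt_card hq.1, hq.2⟩
      · intro t ht
        rw [Finset.mem_filter, Finset.mem_range] at ht
        rw [Finset.mem_filter]
        refine ⟨heT t ht.1, ?_⟩
        rw [heρ t ht.1]
        exact ht.2
      · intro q hq
        rw [Finset.mem_filter] at hq
        exact heρq q hq.1
      · intro t ht
        rw [Finset.mem_filter, Finset.mem_range] at ht
        exact heρ t ht.1
      · intro q hq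
        rw [Finset.mem_filter] at hq
        rw [hWdef]
        show w q = w (e (chRank w v q))
        rw [heρq q hq.1]
    have hWneg : ∀ t, t < M → W t ≤ 0 := fun t _ => (hw (e t)).le
    have hWopt : ∀ t, t < M → OPT ≤ W t := fun t ht => hO2 (e t) (heT t ht)
    have hWmono : ∀ t t', t ≤ t' → t' < M → W t' ≤ W t := by
      intro t t' h1 h2
      show w (e t') ≤ w (e t)
      apply w_antitone (heT t (lt_of_le_of_lt h1 h2)) (heT t' h2)
      rw [heρ t' h2, heρ t (lt_of_le_of_lt h1 h2)]
      exact h1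
    have htotT : ∑ t ∈ Finset.range M, W t = Wstar := by
      rw [hWstar]
      symm
      apply Finset.sum_nbij' (i := fun q => chRank w v q) (j := e)
      · intro q hq
        exact Finset.mem_range.mpr (rank_lt_card hq)
      · intro t ht
        exact heT t (Finset.mem_range.mp ht)
      · intro q hq
        exact heρq q hq
      · intro t ht
        exact heρ t (Finset.mem_range.mp ht)
      · intro q hq
        rw [hWdef]
        show w q = w (e (chRank w v q))
        rw [heρq q hq]
    have hexists : ∃ k', k' < n ∧ Wstar / n ≤ ∑ t ∈ (Finset.range M).filter
        (fun t => t % n = k'), W t := by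
      by_contra hcon
      push_neg at hcon
      have hlt : ∑ k ∈ Finset.range n, (∑ t ∈ (Finset.range M).filter
          (fun t => t % n = k), W t) < ∑ _k ∈ Finset.range n, Wstar / n := by
        apply Finset.sum_lt_sum_of_nonempty ⟨0, Finset.mem_range.mpr hn⟩
        intro k hk
        exact hcon k (Finset.mem_range.mp hk)
      have hfib : ∑ k ∈ Finset.range n, (∑ t ∈ (Finset.range M).filter
          (fun t => t % n = k), W t) = ∑ t ∈ Finset.range M, W t :=
        Finset.sum_fiberwise_of_maps_to (fun t ht => Finset.mem_range.mpr
          (Nat.mod_lt _ hn)) W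
      rw [hfib, htotT, Finset.sum_const, Finset.card_range, nsmul_eq_mul,
        mul_div_cancel₀ _ hnR.ne'] at hlt
      exact lt_irrefl _ hlt
    apply Finset.le_inf'
    intro i _
    rw [hsvalA i, htrans _]
    set k : ℕ := ((σ.symm i : Fin n) : ℕ) with hkd
    have hkn : k < n := (σ.symm i).isLt
    obtain ⟨k', hk'n, hk'v⟩ := hexists
    by_cases hkk : k = k'
    · rw [hkk]
      linarith
    · have hkey := rr_key W OPT M n k k' hkn hk'n hkk hO1 hWopt hWneg hWmono
      linarith
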